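/- Let (P,R) be a finite simple graph and consider the unweighted OPS instance (P,R,g) with g(e) = 1 for every edge e, and let h be a positive integer. Then (P,R,g) admits a valid schedule of heat at most h if and only if the graph (P,R) admits a proper edge colouring with h colours (i.e., its chromatic index is at most h). -/
import Mathlib


open scoped ENNReal BigOperators

namespace PolySched

variable {V : Type*}

/-- A set of edges is a matching in `G`: all edges belong to `G` and no two
distinct edges share an endpoint. -/
def IsMatchingIn (G : SimpleGraph V) (M : Set (Sym2 V)) : Prop :=
  M ⊆ G.edgeSet ∧ M.Pairwise fun e e' => ∀ v, v ∈ e → v ∉ e'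

/-- A schedule is valid for the OPS instance on `G` if each day is a matching. -/
def OPSValid (G : SimpleGraph V) (S : ℕ → Set (Sym2 V)) : Prop :=
  ∀ t, IsMatchingIn G (S t)

/-- A schedule is valid for the DPS instance `(G, f)`. -/
def DPSValid (G : SimpleGraph V) (f : Sym2 V → ℕ) (S : ℕ → Set (Sym2 V)) : Prop :=
  OPSValid G S ∧ ∀ e ∈ G.edgeSet, ∀ t : ℕ, ∃ i < f e, e ∈ S (t + i)

/-- Recurrence time of edge `e` under schedule `S`: the supremum of `d+1` over
all `d` such that some window of `d` consecutive days misses `e`. -/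
noncomputable def recTime (S : ℕ → Set (Sym2 V)) (e : Sym2 V) : ℝ≥0∞ :=
  ⨆ d ∈ {d : ℕ | ∃ t : ℕ, ∀ i < d, e ∉ S (t + i)}, ((d : ℝ≥0∞) + 1)

/-- Heat of a schedule for the OPS instance `(G, g)`. -/
noncomputable def heat (G : SimpleGraph V) (g : Sym2 V → ℝ) (S : ℕ → Set (Sym2 V)) : ℝ≥0∞ :=
  ⨆ e ∈ G.edgeSet, ENNReal.ofReal (g e) * recTime S e
/-- Unweighted OPS = edge colouring.
The unweighted OPS instance (all growth rates 1) admits a schedule of heat ≤ h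
iff the graph has a proper edge colouring with h colours. -/
theorem unweighted_ops_iff_edge_colouring {V : Type*} (G : SimpleGraph V)
    (h : ℕ) (hh : 0 < h) :
    (∃ S : ℕ → Set (Sym2 V), OPSValid G S ∧
        heat G (fun _ => (1 : ℝ)) S ≤ (h : ℝ≥0∞)) ↔
    (∃ c : Sym2 V → Fin h, ∀ e ∈ G.edgeSet, ∀ e' ∈ G.edgeSet,
        e ≠ e' → (∃ v, v ∈ e ∧ v ∈ e') → c e ≠ c e') := by
  classical
  constructor
  · rintro ⟨S, hS, hheat⟩
    have key : ∀ e ∈ G.edgeSet, ∃ i : Fin h, e ∈ S i := by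
      intro e he
      by_contra hcon
      push_neg at hcon
      have hd : h ∈ {d : ℕ | ∃ t : ℕ, ∀ i < d, e ∉ S (t + i)} :=
        ⟨0, fun i hi => by simpa using hcon ⟨i, hi⟩⟩
      have h1 : ((h : ℝ≥0∞) + 1) ≤ recTime S e :=
        le_iSup₂ (f := fun d (_ : d ∈ {d : ℕ | ∃ t : ℕ, ∀ i < d, e ∉ S (t + i)}) =>
          ((d : ℝ≥0∞) + 1)) h hd
      have h2 : recTime S e ≤ (h : ℝ≥0∞) := by
        have h3 : ENNReal.ofReal (1 : ℝ) * recTime S e ≤ heat G (fun _ => (1 : ℝ)) S :=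
          le_iSup₂ (f := fun e (_ : e ∈ G.edgeSet) =>
            ENNReal.ofReal (1 : ℝ) * recTime S e) e he
        simpa using h3.trans hheat
      have hlt : (h : ℝ≥0∞) < (h : ℝ≥0∞) + 1 :=
        ENNReal.lt_add_right (by simp) one_ne_zero
      exact absurd (h1.trans h2) (not_le_of_gt hlt)
    choose c hc using key
    refine ⟨fun e => if he : e ∈ G.edgeSet then c e he else ⟨0, hh⟩, ?_⟩
    rintro e he e' he' hne ⟨v, hv, hv'⟩
    simp only [dif_pos he, dif_pos he']
    intro hceq
    have h1 := hc e he
    have h2 := hc e' he'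
    rw [hceq] at h1
    exact ((hS (c e' he')).2 h1 h2 hne v hv) hv'
  · rintro ⟨c, hc⟩
    refine ⟨fun t => {e | e ∈ G.edgeSet ∧ (c e : ℕ) = t % h}, ?_, ?_⟩
    · intro t
      refine ⟨fun e he => he.1, ?_⟩
      intro e he e' he' hne v hv hv'
      exact hc e he.1 e' he'.1 hne ⟨v, hv, hv'⟩ (Fin.ext (he.2.trans he'.2.symm))
    · refine iSup₂_le fun e he => ?_
      rw [ENNReal.ofReal_one, one_mul]
      refine iSup₂_le fun d hd => ?_
      obtain ⟨t, ht⟩ := hd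
      have hdlt : d < h := by
        by_contra hge
        push_neg at hge
        set i := ((c e : ℕ) + h - t % h) % h with hi
        have hih : i < h := Nat.mod_lt _ hh
        refine ht i (lt_of_lt_of_le hih hge) ?_
        have hth : t % h < h := Nat.mod_lt _ hh
        have hmod : (t + i) % h = (c e : ℕ) := by
          have e1 : (t + i) % h = (t % h + i % h) % h := Nat.add_mod t i h
          have e2 : i % h = i := Nat.mod_eq_of_lt hih
          have e3 : (t % h + ((c e : ℕ) + h - t % h) % h) % h
              = (t % h + ((c e : ℕ) + h - t % h)) % h :=
            Nat.ModEq.add_left _ (Nat.mod_modEq _ h)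
          have e4 : t % h + ((c e : ℕ) + h - t % h) = (c e : ℕ) + h := by omega
          have e5 : ((c e : ℕ) + h) % h = (c e : ℕ) % h := Nat.add_mod_right _ _
          have e6 : (c e : ℕ) % h = (c e : ℕ) := Nat.mod_eq_of_lt (c e).is_lt
          rw [e1, e2, hi, e3, e4, e5, e6]
        exact ⟨he, hmod.symm⟩
      have : (d : ℕ) + 1 ≤ h := hdlt
      exact_mod_cast this

end PolySched
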